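/- Let f(E,n) = −E + 2(3/2 − n^M)(E² − E³/4) with M ≥ 1 a fixed integer. For every I with 4/9 < I < 4, the quadratic 2E² − (4 + 3I)E + 8I is strictly positive for all E ∈ ℝ; consequently, for every such I and every (E,n) with 0 < E < 4 and f(E,n) + I = 0, one has ∂f/∂E(E,n) < 0. In other words, for I > I₁ = 4/9 the entire critical manifold (in the range 0 < E < 4) is attracting. -/

import Mathlib

/-- For `4/9 < I < 4`, the quadratic `2E² - (4 + 3I)E + 8I` is strictly
positive for all real `E`; consequently at every point of the Karma critical
manifold `{f + I = 0}` with `0 < E < 4` the fast-variable partial derivative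
`∂f/∂E` is negative, i.e. the entire critical manifold is attracting there. -/
theorem karma_attracting_for_large_current (M : ℕ) (hM : 1 ≤ M) (f : ℝ → ℝ → ℝ)
    (hf : ∀ E n, f E n = -E + 2 * (3 / 2 - n ^ M) * (E ^ 2 - E ^ 3 / 4)) :
    ∀ I : ℝ, 4 / 9 < I → I < 4 →
      (∀ E : ℝ, 0 < 2 * E ^ 2 - (4 + 3 * I) * E + 8 * I) ∧
      (∀ E n : ℝ, 0 < E → E < 4 → f E n + I = 0 →
        HasDerivAt (fun E' => f E' n)
          (-1 + 2 * (3 / 2 - n ^ M) * (2 * E - (3 / 4) * E ^ 2)) E ∧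
        -1 + 2 * (3 / 2 - n ^ M) * (2 * E - (3 / 4) * E ^ 2) < 0) := by
  intro I hI1 hI2
  have hq : ∀ E : ℝ, 0 < 2 * E ^ 2 - (4 + 3 * I) * E + 8 * I := by
    intro E
    nlinarith [sq_nonneg (4 * E - (4 + 3 * I)), mul_pos (sub_pos.mpr hI2) (by linarith : (0:ℝ) < 9 * I - 4)]
  refine ⟨hq, ?_⟩
  intro E n hE0 hE4 hfI
  set c : ℝ := 2 * (3 / 2 - n ^ M) with hc
  have hderiv : HasDerivAt (fun E' => f E' n)
      (-1 + c * (2 * E - (3 / 4) * E ^ 2)) E := by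
    have h := ((hasDerivAt_id E).neg).add
      ((((hasDerivAt_pow 2 E).sub ((hasDerivAt_pow 3 E).div_const 4)).const_mul c))
    simp only [hf]
    refine (h.congr_deriv (by ring)).congr_of_eventuallyEq (Filter.Eventually.of_forall fun x => ?_)
    simp only [Pi.add_apply, Pi.neg_apply, Pi.sub_apply, id]
    rw [hc]
  refine ⟨hderiv, ?_⟩
  have heq : c * (E ^ 2 - E ^ 3 / 4) = E - I := by
    have h := hfI
    rw [hf] at h
    rw [hc]
    linear_combination h
  have h4 : (0:ℝ) < 4 - E := by linarith
  have hp : 0 < E ^ 2 * (4 - E) / 4 := by positivity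
  have key : (-1 + c * (2 * E - (3 / 4) * E ^ 2)) * (E ^ 2 * (4 - E) / 4)
      = -(2 * E ^ 2 - (4 + 3 * I) * E + 8 * I) * E / 4 := by
    linear_combination (2 * E - 3 / 4 * E ^ 2) * heq
  nlinarith [key, hp, hq E, mul_pos (hq E) hE0]
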